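/- Let (S^p, Σ, A) be a spherical system with colours Δ, and let Δ'' ⊂ Δ be a parabolic distinguished subset (V(Δ'') = V, equivalently Σ(Δ'') = Σ). Then Δ'' is smooth and the quotient spherical system (S^p,Σ,A)/Δ'' has empty set of spherical roots: Σ/Δ'' = ∅. -/
import Mathlib


/-!
STATEMENT 16: Let `(S^p,Σ,A)` be a spherical system with colours `Δ`, and let
`Δ'' ⊆ Δ` be a parabolic distinguished subset (`V(Δ'') = V`).  Then `Δ''` is smooth
and the quotient spherical system has empty set of spherical roots: `Σ/Δ'' = ∅`.

Coordinates with respect to the basis `Σ` of `Ξ` are used, as in the context: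
`V = ℚ⊗Ξ*`, `V(Δ') = ⟨ρ(Δ') ∪ {γ^* : γ ∈ Σ(Δ')}⟩`, `Δ'` smooth if
`V(Δ') = ⟨γ^* : γ ∈ Σ(Δ')⟩`, and `Σ/Δ'` is the set of indecomposable elements of the
semigroup of nonnegative combinations of `Σ` lying in `Ξ/Δ' = V(Δ')^⊥ ∩ Ξ`.
-/

namespace Stmt16

variable {σ Δ : Type*} [Fintype σ] [DecidableEq σ] [Fintype Δ]

def phi (ρ : Δ → σ → ℚ) (D : Finset Δ) (cc : Δ → ℚ) : σ → ℚ :=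
  fun i => ∑ δ ∈ D, cc δ * ρ δ i

def Distinguished (ρ : Δ → σ → ℚ) (D : Finset Δ) : Prop :=
  ∃ cc : Δ → ℚ, (∀ δ ∈ D, 0 < cc δ) ∧ ∀ i, 0 ≤ phi ρ D cc i

def SigmaSet (ρ : Δ → σ → ℚ) (D : Finset Δ) : Set σ :=
  {i | ∃ cc : Δ → ℚ, (∀ δ ∈ D, 0 < cc δ) ∧ (∀ j, 0 ≤ phi ρ D cc j) ∧ 0 < phi ρ D cc i}

def dualBasisVec (i : σ) : σ → ℚ := Pi.single i 1

def VD (ρ : Δ → σ → ℚ) (D : Finset Δ) : Submodule ℚ (σ → ℚ) :=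
  Submodule.span ℚ ((fun δ => ρ δ) '' ↑D ∪ dualBasisVec '' SigmaSet ρ D)

def Smooth (ρ : Δ → σ → ℚ) (D : Finset Δ) : Prop :=
  VD ρ D = Submodule.span ℚ (dualBasisVec '' SigmaSet ρ D)

def XiQuotSet (ρ : Δ → σ → ℚ) (D : Finset Δ) : Set (σ → ℚ) :=
  {ξ | ∀ v ∈ VD ρ D, ∑ i, v i * ξ i = 0}

def Sem (ρ : Δ → σ → ℚ) (D : Finset Δ) : Set (σ → ℚ) :=
  {ξ | (∀ i, ∃ m : ℕ, ξ i = m) ∧ ξ ∈ XiQuotSet ρ D}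

def SigmaQuot (ρ : Δ → σ → ℚ) (D : Finset Δ) : Set (σ → ℚ) :=
  {ξ | ξ ∈ Sem ρ D ∧ ξ ≠ 0 ∧
    ∀ a ∈ Sem ρ D, ∀ b ∈ Sem ρ D, ξ = a + b → a = 0 ∨ b = 0}

/-! ### Auxiliary lemmas -/

lemma phi_add (ρ : Δ → σ → ℚ) (D : Finset Δ) (a b : Δ → ℚ) (j : σ) :
    phi ρ D (a + b) j = phi ρ D a j + phi ρ D b j := by
  simp [phi, add_mul, Finset.sum_add_distrib]

lemma phi_smul (ρ : Δ → σ → ℚ) (D : Finset Δ) (c : ℚ) (a : Δ → ℚ) (j : σ) :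
    phi ρ D (c • a) j = c * phi ρ D a j := by
  simp [phi, Finset.mul_sum, mul_assoc]

lemma phi_sum {ι : Type*} (ρ : Δ → σ → ℚ) (D : Finset Δ) (t : Finset ι)
    (f : ι → Δ → ℚ) (j : σ) :
    phi ρ D (∑ k ∈ t, f k) j = ∑ k ∈ t, phi ρ D (f k) j := by
  simp only [phi, Finset.sum_apply, Finset.sum_mul]
  exact Finset.sum_comm

/-- From a distinguished set, build a single "generic" coefficient vector `C`
which is admissible and satisfies `phi C j > 0` exactly on `SigmaSet`. -/
lemma exists_generic (ρ : Δ → σ → ℚ) (D : Finset Δ) (hdist : Distinguished ρ D) :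
    ∃ C : Δ → ℚ, (∀ δ ∈ D, 0 < C δ) ∧ (∀ j, 0 ≤ phi ρ D C j) ∧
      (∀ j ∈ SigmaSet ρ D, 0 < phi ρ D C j) ∧
      (∀ j, j ∉ SigmaSet ρ D → phi ρ D C j = 0) := by
  classical
  obtain ⟨cc0, h0pos, h0nn⟩ := hdist
  set G : σ → Δ → ℚ := fun j => if h : j ∈ SigmaSet ρ D then h.choose else 0 with hG
  have hGspec : ∀ j ∈ SigmaSet ρ D, (∀ δ ∈ D, 0 < G j δ) ∧ (∀ k, 0 ≤ phi ρ D (G j) k) ∧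
      0 < phi ρ D (G j) j := by
    intro j hj
    simpa [hG, dif_pos hj] using hj.choose_spec
  have hGnn : ∀ j, (∀ δ ∈ D, 0 ≤ G j δ) ∧ (∀ k, 0 ≤ phi ρ D (G j) k) := by
    intro j
    by_cases hj : j ∈ SigmaSet ρ D
    · exact ⟨fun δ hδ => ((hGspec j hj).1 δ hδ).le, (hGspec j hj).2.1⟩
    · simp [hG, dif_neg hj, phi]
  set C : Δ → ℚ := cc0 + ∑ j : σ, G j with hC
  have hpos : ∀ δ ∈ D, 0 < C δ := by
    intro δ hδ
    have : 0 ≤ ∑ j : σ, G j δ :=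
      Finset.sum_nonneg fun j _ => (hGnn j).1 δ hδ
    have h0 := h0pos δ hδ
    simp only [hC, Pi.add_apply, Finset.sum_apply]
    linarith
  have hnn : ∀ k, 0 ≤ phi ρ D C k := by
    intro k
    rw [hC, phi_add, phi_sum]
    have : 0 ≤ ∑ j : σ, phi ρ D (G j) k :=
      Finset.sum_nonneg fun j _ => (hGnn j).2 k
    have := h0nn k
    linarith
  have hS : ∀ j ∈ SigmaSet ρ D, 0 < phi ρ D C j := by
    intro j hj
    rw [hC, phi_add, phi_sum]
    have h1 : phi ρ D (G j) j ≤ ∑ k : σ, phi ρ D (G k) j :=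
      Finset.single_le_sum (fun k _ => (hGnn k).2 j) (Finset.mem_univ j)
    have h2 := (hGspec j hj).2.2
    have := h0nn j
    linarith
  refine ⟨C, hpos, hnn, hS, ?_⟩
  intro j hj
  rcases (hnn j).lt_or_eq with hlt | heq
  · exact absurd ⟨C, hpos, hnn, hlt⟩ hj
  · exact heq.symm

/-- For finitely many linear conditions `c k + M * d k > 0` with `d k > 0`,
a sufficiently large `M` works. -/
lemma exists_big_M {ι : Type*} (t : Finset ι) (c d : ι → ℚ)
    (hd : ∀ k ∈ t, 0 < d k) :
    ∃ M : ℚ, 0 < M ∧ ∀ k ∈ t, 0 < c k + M * d k := by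
  refine ⟨1 + ∑ k ∈ t, |c k| / d k, ?_, ?_⟩
  · have : 0 ≤ ∑ k ∈ t, |c k| / d k :=
      Finset.sum_nonneg fun k hk => div_nonneg (abs_nonneg _) (hd k hk).le
    linarith
  · intro k hk
    have hdk := hd k hk
    have h1 : |c k| / d k ≤ ∑ j ∈ t, |c j| / d j :=
      Finset.single_le_sum (fun j hj => div_nonneg (abs_nonneg _) (hd j hj).le) hk
    have h2 : (|c k| / d k) * d k = |c k| := div_mul_cancel₀ _ hdk.ne'
    have h3 : (1 + ∑ j ∈ t, |c j| / d j) * d k ≥ (1 + |c k| / d k) * d k := by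
      apply mul_le_mul_of_nonneg_right _ hdk.le
      linarith
    have h4 : (1 + |c k| / d k) * d k = d k + |c k| := by rw [add_mul, one_mul, h2]
    have h5 := neg_abs_le (c k)
    nlinarith
    
open Classical in
/-- The linear projection killing the coordinates in `S`. -/
noncomputable def projAway (S : Set σ) : (σ → ℚ) →ₗ[ℚ] (σ → ℚ) where
  toFun v := fun j => if j ∈ S then 0 else v j
  map_add' x y := by
    funext j; by_cases h : j ∈ S <;> simp [h]
  map_smul' c x := by
    funext j; by_cases h : j ∈ S <;> simp [h]

/-- Parabolic implies `Σ(Δ'') = Σ`. -/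
lemma sigmaSet_eq_univ (ρ : Δ → σ → ℚ) (D : Finset Δ)
    (hdist : Distinguished ρ D) (hpar : VD ρ D = ⊤) :
    SigmaSet ρ D = Set.univ := by
  classical
  ext i
  simp only [Set.mem_univ, iff_true]
  by_contra hi
  obtain ⟨C, hCpos, hCnn, hCS, hC0⟩ := exists_generic ρ D hdist
  set S := SigmaSet ρ D with hSdef
  -- `e_i` lies in the span of the projected colours
  have hei : dualBasisVec i ∈ VD ρ D := by rw [hpar]; exact Submodule.mem_top
  have heiproj : projAway S (dualBasisVec i) = dualBasisVec i := by
    funext j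
    by_cases h : j ∈ S
    · have : j ≠ i := fun hji => hi (hji ▸ h)
      simp [projAway, h, dualBasisVec, Pi.single_apply, this]
    · simp [projAway, h]
  have hmem : dualBasisVec i ∈
      Submodule.span ℚ ((fun δ => projAway S (ρ δ)) '' ↑D) := by
    rw [← heiproj]
    have h1 : projAway S (dualBasisVec i) ∈ Submodule.map (projAway S) (VD ρ D) :=
      Submodule.mem_map_of_mem hei
    rw [VD, Submodule.map_span] at h1
    refine Submodule.span_le.mpr ?_ h1
    rintro x ⟨y, hy, rfl⟩
    rcases hy with ⟨δ, hδ, rfl⟩ | ⟨j, hj, rfl⟩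
    · exact Submodule.subset_span ⟨δ, hδ, rfl⟩
    · have : projAway S (dualBasisVec j) = 0 := by
        funext k
        by_cases h : k ∈ S
        · simp [projAway, h]
        · have : k ≠ j := fun hkj => h (hkj ▸ hj)
          simp [projAway, h, dualBasisVec, Pi.single_apply, this]
      rw [this]; exact Submodule.zero_mem _
  rw [Finsupp.mem_span_image_iff_linearCombination] at hmem
  obtain ⟨l, hl, hcomb⟩ := hmem
  -- evaluate the combination on coordinates outside `S`
  have hkey : ∀ j, j ∉ S → phi ρ D l j = dualBasisVec i j := by
    intro j hj
    have := congrFun hcomb j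
    rw [Finsupp.linearCombination_apply, Finsupp.sum] at this
    simp only [Finset.sum_apply, Pi.smul_apply, smul_eq_mul] at this
    have hval : ∀ δ, (projAway S (ρ δ)) j = ρ δ j := fun δ => by simp [projAway, hj]
    simp only [hval] at this
    rw [← this]
    rw [phi]
    refine (Finset.sum_subset (fun δ hδ => ?_) (fun δ _ hδ => ?_)).symm
    · exact hl hδ
    · rw [Finsupp.notMem_support_iff.mp hδ, zero_mul]
  -- choose a large `M` and form the admissible vector `l + M • C`
  obtain ⟨M, hMpos, hM⟩ := exists_big_M
      (t := D.disjSum (Finset.univ.filter fun j => 0 < phi ρ D C j))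
      (c := Sum.elim (fun δ => l δ) (phi ρ D l))
      (d := Sum.elim C (phi ρ D C))
      (by
        rintro (δ | j) hk
        · exact hCpos δ (by simpa using (Finset.mem_disjSum.mp hk))
        · simpa using (Finset.mem_disjSum.mp hk))
  set b : Δ → ℚ := (fun δ => l δ) + M • C with hb
  have hphib : ∀ j, phi ρ D b j = phi ρ D l j + M * phi ρ D C j := by
    intro j; rw [hb, phi_add, phi_smul]
  have hbmem : i ∈ S := by
    refine ⟨b, ?_, ?_, ?_⟩
    · intro δ hδ
      have := hM (Sum.inl δ) (Finset.inl_mem_disjSum.mpr hδ)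
      simpa [hb] using this
    · intro j
      by_cases hj : 0 < phi ρ D C j
      · have := hM (Sum.inr j) (Finset.inr_mem_disjSum.mpr (by simp [hj]))
        simp only [Sum.elim_inr] at this
        rw [hphib]; linarith
      · have hz : phi ρ D C j = 0 := le_antisymm (not_lt.mp hj) (hCnn j)
        have hjS : j ∉ S := fun h => hj (hCS j h)
        rw [hphib, hz, mul_zero, add_zero, hkey j hjS]
        by_cases h : j = i <;> simp [dualBasisVec, Pi.single_apply, h]
    · have hz : phi ρ D C i = 0 := hC0 i hi
      rw [hphib, hz, mul_zero, add_zero, hkey i hi]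
      simp [dualBasisVec]
  exact hi hbmem

theorem parabolic_is_smooth_with_empty_quotient
    (ρ : Δ → σ → ℚ) (D : Finset Δ)
    (hdist : Distinguished ρ D)
    (hpar : VD ρ D = ⊤) :
    Smooth ρ D ∧ SigmaQuot ρ D = ∅ := by
  classical
  have huniv := sigmaSet_eq_univ ρ D hdist hpar
  constructor
  · -- Smoothness: the dual basis vectors over `SigmaSet = univ` span everything
    rw [Smooth, hpar, huniv]
    symm
    rw [Submodule.eq_top_iff']
    intro x
    have hx : x = ∑ i : σ, x i • dualBasisVec i := by
      have h1 : ∀ i : σ, x i • dualBasisVec i = Pi.single i (x i) := by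
        intro i
        rw [dualBasisVec, ← Pi.single_smul, smul_eq_mul, mul_one]
      simp only [h1]
      exact (Finset.univ_sum_single x).symm
    rw [hx]
    exact Submodule.sum_mem _ fun i _ =>
      Submodule.smul_mem _ _ (Submodule.subset_span ⟨i, Set.mem_univ i, rfl⟩)
  · -- Empty quotient: `VD = ⊤` forces `XiQuotSet = {0}`
    ext ξ
    simp only [Set.mem_empty_iff_false, iff_false]
    rintro ⟨⟨-, hquot⟩, hne, -⟩
    apply hne
    funext j
    have h := hquot (dualBasisVec j) (by rw [hpar]; exact Submodule.mem_top)
    have hsum : ∑ i, dualBasisVec j i * ξ i = ξ j := by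
      rw [Finset.sum_eq_single j]
      · simp [dualBasisVec]
      · intro i _ hij
        simp [dualBasisVec, Pi.single_apply, hij]
      · intro hj; exact absurd (Finset.mem_univ j) hj
    rw [hsum] at h
    simpa using h

end Stmt16
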